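/- Let u : ℝ → ℝ be continuously differentiable with u(−π/3) = u(π/3) = 0, and define g on the open interval (−π/3, π/3) by g(x) = 2·u(x)²·sin x/(2cos x − 1). Then: (i) g(x) → 0 as x → −π/3 from the right and as x → π/3 from the left, so g extends to a continuous function on [−π/3, π/3] vanishing at both endpoints; (ii) g is differentiable on (−π/3, π/3) with g' integrable over (−π/3, π/3); and (iii) ∫_{−π/3}^{π/3} g'(x) dx = 0. -/

import Mathlib

open Real MeasureTheory Set Filter

private lemma slope_div_aux {u : ℝ → ℝ} {e D : ℝ}
    (hu : DifferentiableAt ℝ u e) (hu0 : u e = 0)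
    (hd0 : 2 * Real.cos e - 1 = 0)
    (hD : HasDerivAt (fun x => 2 * Real.cos x - 1) D e) (hDne : D ≠ 0) :
    Tendsto (fun x => u x / (2 * Real.cos x - 1)) (nhdsWithin e {e}ᶜ)
      (nhds (deriv u e / D)) := by
  have hs1 : Tendsto (slope u e) (nhdsWithin e {e}ᶜ) (nhds (deriv u e)) :=
    hasDerivAt_iff_tendsto_slope.mp hu.hasDerivAt
  have hs2 : Tendsto (slope (fun x => 2 * Real.cos x - 1) e) (nhdsWithin e {e}ᶜ) (nhds D) :=
    hasDerivAt_iff_tendsto_slope.mp hD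
  refine (hs1.div hs2 hDne).congr' ?_
  filter_upwards [self_mem_nhdsWithin] with x hx
  have hxe : x - e ≠ 0 := sub_ne_zero.mpr hx
  show slope u e x / slope (fun x => 2 * Real.cos x - 1) e x = _
  rw [slope_def_field, slope_def_field, hu0, hd0, sub_zero, sub_zero]
  rcases eq_or_ne (2 * Real.cos x - 1) 0 with h | h
  · simp [h]
  · field_simp

theorem stmt_18
    (u : ℝ → ℝ) (hu : ContDiff ℝ 1 u)
    (hu0 : u (-(Real.pi/3)) = 0) (hu1 : u (Real.pi/3) = 0)
    (g : ℝ → ℝ)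
    (hg : ∀ x ∈ Set.Ioo (-(Real.pi/3)) (Real.pi/3),
      g x = 2 * (u x)^2 * Real.sin x / (2 * Real.cos x - 1)) :
    (Filter.Tendsto g (nhdsWithin (-(Real.pi/3)) (Set.Ioi (-(Real.pi/3)))) (nhds 0)
      ∧ Filter.Tendsto g (nhdsWithin (Real.pi/3) (Set.Iio (Real.pi/3))) (nhds 0)
      ∧ ∃ G : ℝ → ℝ, ContinuousOn G (Set.Icc (-(Real.pi/3)) (Real.pi/3))
          ∧ (∀ x ∈ Set.Ioo (-(Real.pi/3)) (Real.pi/3), G x = g x)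
          ∧ G (-(Real.pi/3)) = 0 ∧ G (Real.pi/3) = 0)
    ∧ ((∀ x ∈ Set.Ioo (-(Real.pi/3)) (Real.pi/3), DifferentiableAt ℝ g x)
      ∧ MeasureTheory.IntegrableOn (deriv g) (Set.Ioo (-(Real.pi/3)) (Real.pi/3)))
    ∧ (∫ x in Set.Ioo (-(Real.pi/3)) (Real.pi/3), deriv g x) = 0 := by
  have hπ : (0:ℝ) < Real.pi := Real.pi_pos
  set c : ℝ := Real.pi / 3 with hcdef
  have hc0 : 0 < c := by positivity
  have hlt : -c < c := by linarith
  have hcosc : Real.cos c = 1/2 := Real.cos_pi_div_three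
  have hsinc : Real.sin c = Real.sqrt 3 / 2 := Real.sin_pi_div_three
  have h3 : (0:ℝ) < Real.sqrt 3 := Real.sqrt_pos.mpr (by norm_num)
  have hsinc' : Real.sin c ≠ 0 := by rw [hsinc]; positivity
  have hsinc2 : (2:ℝ) * Real.sin c ≠ 0 := by
    simp [hsinc']
  have hudiff : Differentiable ℝ u := hu.differentiable one_ne_zero
  -- denominator positive on Ioo
  have hdpos : ∀ x ∈ Ioo (-c) c, 0 < 2 * Real.cos x - 1 := by
    intro x hx
    have hax : |x| < c := abs_lt.mpr ⟨hx.1, hx.2⟩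
    have hcpi : c ≤ Real.pi := by rw [hcdef]; linarith
    have h2 : Real.cos c < Real.cos |x| :=
      Real.strictAntiOn_cos ⟨abs_nonneg x, hax.le.trans hcpi⟩
        ⟨hc0.le, hcpi⟩ hax
    rw [Real.cos_abs] at h2
    rw [hcosc] at h2
    linarith
  have hdne : ∀ x ∈ Ioo (-c) c, 2 * Real.cos x - 1 ≠ 0 :=
    fun x hx => (hdpos x hx).ne'
  -- derivative of the denominator at endpoints
  have hdD : ∀ e : ℝ, HasDerivAt (fun x => 2 * Real.cos x - 1) (-(2 * Real.sin e)) e := by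
    intro e
    have := ((Real.hasDerivAt_cos e).const_mul 2).sub_const 1
    exact this.congr_deriv (by ring)
  have hd0m : 2 * Real.cos (-c) - 1 = 0 := by rw [Real.cos_neg, hcosc]; ring
  have hd0p : 2 * Real.cos c - 1 = 0 := by rw [hcosc]; ring
  -- the quotient limits at the endpoints
  have hQm : Tendsto (fun x => u x / (2 * Real.cos x - 1)) (nhdsWithin (-c) {-c}ᶜ)
      (nhds (deriv u (-c) / (2 * Real.sin c))) := by
    have hD : HasDerivAt (fun x => 2 * Real.cos x - 1) (2 * Real.sin c) (-c) := by
      have := hdD (-c); rw [Real.sin_neg] at this; convert this using 1; ring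
    exact slope_div_aux (hudiff (-c)) hu0 hd0m hD hsinc2
  have hQp : Tendsto (fun x => u x / (2 * Real.cos x - 1)) (nhdsWithin c {c}ᶜ)
      (nhds (deriv u c / (-(2 * Real.sin c)))) := by
    exact slope_div_aux (hudiff c) hu1 hd0p (hdD c) (by simpa using hsinc2)
  -- the formula for g
  set f : ℝ → ℝ := fun x => 2 * (u x)^2 * Real.sin x / (2 * Real.cos x - 1) with hfdef
  have hfsplit : ∀ x, f x = (2 * u x * Real.sin x) * (u x / (2 * Real.cos x - 1)) := by
    intro x; rw [hfdef]; ring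
  -- limits of f at the endpoints (punctured)
  have hfm : Tendsto f (nhdsWithin (-c) {-c}ᶜ) (nhds 0) := by
    have h1 : Tendsto (fun x => 2 * u x * Real.sin x) (nhdsWithin (-c) {-c}ᶜ)
        (nhds (2 * u (-c) * Real.sin (-c))) :=
      (((continuous_const.mul hudiff.continuous).mul Real.continuous_sin).tendsto _).mono_left
        nhdsWithin_le_nhds
    have := h1.mul hQm
    rw [hu0] at this
    exact Tendsto.congr (fun x => (hfsplit x).symm) (by simpa using this)
  have hfp : Tendsto f (nhdsWithin c {c}ᶜ) (nhds 0) := by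
    have h1 : Tendsto (fun x => 2 * u x * Real.sin x) (nhdsWithin c {c}ᶜ)
        (nhds (2 * u c * Real.sin c)) :=
      (((continuous_const.mul hudiff.continuous).mul Real.continuous_sin).tendsto _).mono_left
        nhdsWithin_le_nhds
    have := h1.mul hQp
    rw [hu1] at this
    exact Tendsto.congr (fun x => (hfsplit x).symm) (by simpa using this)
  -- part (i): one-sided limits of g
  have hIoo_m : Ioo (-c) c ∈ nhdsWithin (-c) (Ioi (-c)) :=
    Ioo_mem_nhdsGT hlt
  have hIoo_p : Ioo (-c) c ∈ nhdsWithin c (Iio c) :=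
    Ioo_mem_nhdsLT hlt
  have htm : Tendsto g (nhdsWithin (-c) (Ioi (-c))) (nhds 0) := by
    refine (hfm.mono_left (nhdsWithin_mono _ ?_)).congr' ?_
    · intro x hx; exact ne_of_gt hx
    · filter_upwards [hIoo_m] with x hx
      exact (hg x hx).symm
  have htp : Tendsto g (nhdsWithin c (Iio c)) (nhds 0) := by
    refine (hfp.mono_left (nhdsWithin_mono _ ?_)).congr' ?_
    · intro x hx; exact ne_of_lt hx
    · filter_upwards [hIoo_p] with x hx
      exact (hg x hx).symm
  -- the extended quotient Q
  set Q : ℝ → ℝ := fun x => if x ∈ Ioo (-c) c then u x / (2 * Real.cos x - 1)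
    else if x < 0 then deriv u (-c) / (2 * Real.sin c) else deriv u c / (-(2 * Real.sin c))
    with hQdef
  have hQIoo : ∀ x ∈ Ioo (-c) c, Q x = u x / (2 * Real.cos x - 1) := by
    intro x hx; rw [hQdef]; simp [hx]
  have hQm0 : Q (-c) = deriv u (-c) / (2 * Real.sin c) := by
    rw [hQdef]
    have h1 : -c ∉ Ioo (-c) c := fun h => lt_irrefl _ h.1
    have h2 : -c < 0 := by linarith
    simp [h1, h2]
  have hQp0 : Q c = deriv u c / (-(2 * Real.sin c)) := by
    rw [hQdef]
    have h1 : c ∉ Ioo (-c) c := fun h => lt_irrefl _ h.2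
    have h2 : ¬ (c < 0) := not_lt.mpr hc0.le
    simp [h1, h2]
  have hQcont : ContinuousOn Q (Icc (-c) c) := by
    intro x hx
    rcases eq_or_ne x (-c) with rfl | hxm
    · rw [← continuousWithinAt_diff_self]
      rw [ContinuousWithinAt, hQm0]
      refine (hQm.mono_left (nhdsWithin_mono _ ?_)).congr' ?_
      · intro y hy; exact hy.2
      · filter_upwards [self_mem_nhdsWithin,
          mem_nhdsWithin_of_mem_nhds (Iio_mem_nhds hlt)] with y hy hy2
        exact (hQIoo y ⟨lt_of_le_of_ne hy.1.1 (Ne.symm hy.2), hy2⟩).symm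
    · rcases eq_or_ne x c with rfl | hxp
      · rw [← continuousWithinAt_diff_self]
        rw [ContinuousWithinAt, hQp0]
        refine (hQp.mono_left (nhdsWithin_mono _ ?_)).congr' ?_
        · intro y hy; exact hy.2
        · filter_upwards [self_mem_nhdsWithin,
            mem_nhdsWithin_of_mem_nhds (Ioi_mem_nhds hlt)] with y hy hy2
          exact (hQIoo y ⟨hy2, lt_of_le_of_ne hy.1.2 hy.2⟩).symm
      · have hxIoo : x ∈ Ioo (-c) c :=
          ⟨lt_of_le_of_ne hx.1 (Ne.symm hxm), lt_of_le_of_ne hx.2 hxp⟩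
        have : ContinuousAt Q x := by
          have hev : (fun y => u y / (2 * Real.cos y - 1)) =ᶠ[nhds x] Q := by
            filter_upwards [isOpen_Ioo.mem_nhds hxIoo] with y hy
            exact (hQIoo y hy).symm
          refine ContinuousAt.congr ?_ hev
          exact (hudiff.continuous.continuousAt).div
            (by fun_prop) (hdne x hxIoo)
        exact this.continuousWithinAt
  -- the continuous extension G
  set G : ℝ → ℝ := fun x => 2 * u x * Real.sin x * Q x with hGdef
  have hGf : ∀ x ∈ Ioo (-c) c, G x = f x := by
    intro x hx
    rw [hGdef]
    simp only
    rw [hQIoo x hx, ← hfsplit]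
  have hGcont : ContinuousOn G (Icc (-c) c) :=
    (((continuous_const.mul hudiff.continuous).mul Real.continuous_sin).continuousOn).mul hQcont
  have hGm0 : G (-c) = 0 := by rw [hGdef]; simp [hu0]
  have hGp0 : G c = 0 := by rw [hGdef]; simp [hu1]
  -- part (ii): differentiability and deriv identity
  have hderiv : ∀ x ∈ Ioo (-c) c, DifferentiableAt ℝ g x ∧
      HasDerivAt g (deriv g x) x ∧
      deriv g x = 4 * deriv u x * Real.sin x * Q x + 2 * u x * Real.cos x * Q x
        + 4 * (Real.sin x)^2 * (Q x)^2 := by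
    intro x hx
    have hux : HasDerivAt u (deriv u x) x := (hudiff x).hasDerivAt
    have hN : HasDerivAt (fun y => 2 * (u y)^2 * Real.sin y)
        (2 * (2 * u x * deriv u x) * Real.sin x + 2 * (u x)^2 * Real.cos x) x := by
      have h1 : HasDerivAt (fun y => (u y)^2) (2 * u x * deriv u x) x := by
        have := hux.pow 2
        norm_num at this
        exact this
      have h2 := (h1.const_mul 2).mul (Real.hasDerivAt_sin x)
      exact h2
    have hfx := hN.div (hdD x) (hdne x hx)
    have hgf : g =ᶠ[nhds x] f := by
      filter_upwards [isOpen_Ioo.mem_nhds hx] with y hy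
      exact hg y hy
    have hdiff : DifferentiableAt ℝ g x :=
      (hgf.differentiableAt_iff).mpr hfx.differentiableAt
    have hde : deriv g x = deriv f x := hgf.deriv_eq
    refine ⟨hdiff, hdiff.hasDerivAt, ?_⟩
    rw [hde, show deriv f x = _ from hfx.deriv, hQIoo x hx]
    have hne := hdne x hx
    field_simp
    ring
  set F : ℝ → ℝ := fun x => 4 * deriv u x * Real.sin x * Q x + 2 * u x * Real.cos x * Q x
        + 4 * (Real.sin x)^2 * (Q x)^2 with hFdef
  have hFcont : ContinuousOn F (Icc (-c) c) := by
    apply ContinuousOn.add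
    apply ContinuousOn.add
    · exact (((continuous_const.mul (hu.continuous_deriv le_rfl)).mul
        Real.continuous_sin).continuousOn).mul hQcont
    · exact (((continuous_const.mul hudiff.continuous).mul
        Real.continuous_cos).continuousOn).mul hQcont
    · exact ((continuous_const.mul (Real.continuous_sin.pow 2)).continuousOn).mul (hQcont.pow 2)
  have hFint : IntegrableOn F (Ioo (-c) c) :=
    (hFcont.integrableOn_compact isCompact_Icc).mono_set Ioo_subset_Icc_self
  have hgint : IntegrableOn (deriv g) (Ioo (-c) c) :=
    hFint.congr_fun (fun x hx => ((hderiv x hx).2.2).symm) measurableSet_Ioo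
  have hGderiv : ∀ x ∈ Ioo (-c) c, HasDerivWithinAt G (deriv g x) (Ioi x) x := by
    intro x hx
    have hgx := (hderiv x hx).2.1
    have hGg : G =ᶠ[nhds x] g := by
      filter_upwards [isOpen_Ioo.mem_nhds hx] with y hy
      rw [hGf y hy]; exact (hg y hy).symm
    exact (hgx.congr_of_eventuallyEq hGg).hasDerivWithinAt
  have hii : IntervalIntegrable (deriv g) volume (-c) c := by
    rw [intervalIntegrable_iff_integrableOn_Ioc_of_le hlt.le]
    exact (integrableOn_Ioc_iff_integrableOn_Ioo).mpr hgint
  have hint0 : (∫ x in Ioo (-c) c, deriv g x) = 0 := by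
    have h := intervalIntegral.integral_eq_sub_of_hasDeriv_right_of_le hlt.le hGcont hGderiv hii
    rw [hGp0, hGm0, sub_zero] at h
    rw [← MeasureTheory.integral_Ioc_eq_integral_Ioo, ← intervalIntegral.integral_of_le hlt.le]
    exact h
  refine ⟨⟨htm, htp, G, hGcont, ?_, hGm0, hGp0⟩, ⟨fun x hx => (hderiv x hx).1, hgint⟩, hint0⟩
  intro x hx
  rw [hGf x hx]; exact (hg x hx).symm
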